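/- As θ → ∞, d(θ) = θ·b'(θ) − b(θ) converges to −log π(u_min), where u_min is the minimum element of U. -/

import Mathlib

open Finset Real Filter

set_option maxHeartbeats 1000000

/-- As `θ → ∞`, `d(θ) = θ·b'(θ) − b(θ)` converges to
`−log p(u_min)`, where `u_min` is the minimum element of `U`. -/
theorem kl_tilt_tendsto (U : Finset ℝ) (hU : U.Nonempty)
    (p : ℝ → ℝ) (hpos : ∀ u ∈ U, 0 < p u) (hsum : ∑ u ∈ U, p u = 1)
    (h2 : ∃ u ∈ U, ∃ v ∈ U, u ≠ v)
    (b : ℝ → ℝ) (hb : ∀ t : ℝ, b t = Real.log (∑ u ∈ U, p u * Real.exp (-t * u))) :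
    Tendsto (fun t => t * deriv b t - b t) atTop
      (nhds (-Real.log (p (U.min' hU)))) := by
  set m := U.min' hU with hm
  have hmU : m ∈ U := U.min'_mem hU
  have hmle : ∀ u ∈ U, m ≤ u := fun u hu => U.min'_le u hu
  set g : ℝ → ℝ := fun t => ∑ u ∈ U, p u * Real.exp (-t * (u - m)) with hgdef
  have hgpos : ∀ t, 0 < g t := fun t =>
    Finset.sum_pos (fun u hu => mul_pos (hpos u hu) (Real.exp_pos _)) hU
  set g' : ℝ → ℝ := fun t => ∑ u ∈ U, p u * (Real.exp (-t * (u - m)) * -(u - m))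
    with hg'def
  have hderivg : ∀ t, HasDerivAt g (g' t) t := by
    intro t
    apply HasDerivAt.fun_sum
    intro u hu
    have h1 : HasDerivAt (fun t : ℝ => -t * (u - m)) (-(u - m)) t := by
      simpa using ((hasDerivAt_id t).neg.mul_const (u - m))
    exact (h1.exp).const_mul (p u)
  have hbeq : ∀ t, b t = -(t * m) + Real.log (g t) := by
    intro t
    rw [hb]
    have hS : (∑ u ∈ U, p u * Real.exp (-t * u)) = Real.exp (-(t * m)) * g t := by
      rw [hgdef]
      rw [Finset.mul_sum]
      refine Finset.sum_congr rfl fun u hu => ?_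
      rw [← mul_assoc, mul_comm (Real.exp _) (p u), mul_assoc, ← Real.exp_add]
      ring_nf
    rw [hS, Real.log_mul (Real.exp_ne_zero _) (ne_of_gt (hgpos t)), Real.log_exp]
  have hderivb : ∀ t, deriv b t = -m + g' t / g t := by
    intro t
    have hb' : b = fun t => -(t * m) + Real.log (g t) := funext hbeq
    rw [hb']
    have h1 : HasDerivAt (fun t : ℝ => -(t * m)) (-m) t := by
      simpa using ((hasDerivAt_id t).mul_const m).fun_neg
    have h2 : HasDerivAt (fun t => Real.log (g t)) (g' t / g t) t :=
      (hderivg t).log (ne_of_gt (hgpos t))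
    exact (h1.add h2).deriv
  set N : ℝ → ℝ := fun t => ∑ u ∈ U, p u * -(u - m) * (t * Real.exp (-t * (u - m)))
    with hNdef
  have hkey : ∀ t, t * deriv b t - b t = N t / g t - Real.log (g t) := by
    intro t
    have hgne : g t ≠ 0 := ne_of_gt (hgpos t)
    have hN' : N t = t * g' t := by
      rw [hNdef, hg'def, Finset.mul_sum]
      exact Finset.sum_congr rfl fun u hu => by ring
    rw [hderivb, hbeq, hN']
    field_simp
    ring
  have hNlim : Tendsto N atTop (nhds 0) := by
    have h0 : Tendsto N atTop (nhds (∑ _u ∈ U, (0 : ℝ))) := by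
      apply tendsto_finset_sum
      intro u hu
      by_cases h : u = m
      · subst h
        simpa using (tendsto_const_nhds : Tendsto (fun _ : ℝ => (0:ℝ)) atTop (nhds 0))
      · have hc : 0 < u - m := sub_pos.2 (lt_of_le_of_ne (hmle u hu) (Ne.symm h))
        have hφ : Tendsto (fun x : ℝ => x * Real.exp (-x)) atTop (nhds 0) := by
          simpa using Real.tendsto_pow_mul_exp_neg_atTop_nhds_zero 1
        have h1 : Tendsto (fun t : ℝ => (t * (u - m)) * Real.exp (-(t * (u - m))))
            atTop (nhds 0) := hφ.comp (tendsto_id.atTop_mul_const hc)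
        have h2 : Tendsto (fun t : ℝ => t * Real.exp (-t * (u - m))) atTop (nhds 0) := by
          have h3 := h1.const_mul ((u - m)⁻¹)
          rw [mul_zero] at h3
          refine h3.congr fun t => ?_
          field_simp
        have h4 := h2.const_mul (p u * -(u - m))
        rw [mul_zero] at h4
        refine h4.congr fun t => by ring
    simpa using h0
  have hglim : Tendsto g atTop (nhds (p m)) := by
    have h0 : Tendsto g atTop (nhds (∑ u ∈ U, if u = m then p u else 0)) := by
      apply tendsto_finset_sum
      intro u hu
      by_cases h : u = m
      · subst h
        simp only [if_pos rfl]
        simpa using (tendsto_const_nhds : Tendsto (fun _ : ℝ => p u) atTop (nhds (p u)))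
      · simp only [if_neg h]
        have hc : 0 < u - m := sub_pos.2 (lt_of_le_of_ne (hmle u hu) (Ne.symm h))
        have h1 : Tendsto (fun t : ℝ => -t * (u - m)) atTop atBot := by
          have h0 : Tendsto (fun t : ℝ => t * -(u - m)) atTop atBot :=
            tendsto_id.atTop_mul_const_of_neg (by linarith)
          exact h0.congr fun t => by ring
        have h2 : Tendsto (fun t : ℝ => Real.exp (-t * (u - m))) atTop (nhds 0) :=
          Real.tendsto_exp_atBot.comp h1
        have h3 := h2.const_mul (p u)
        rw [mul_zero] at h3
        exact h3
    have hsum' : (∑ u ∈ U, if u = m then p u else 0) = p m := by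
      rw [Finset.sum_ite_eq' U m p]
      simp [hmU]
    rwa [hsum'] at h0
  have hpm : p m ≠ 0 := ne_of_gt (hpos m hmU)
  have hfin : Tendsto (fun t => N t / g t - Real.log (g t)) atTop
      (nhds (0 / p m - Real.log (p m))) :=
    (hNlim.div hglim hpm).sub (hglim.log hpm)
  rw [zero_div, zero_sub] at hfin
  exact (tendsto_congr hkey).mpr hfin
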